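/- Let B be a uniformly random sequence in {+1, −1}^w and for k > 0 let E^L_k be the event that some prefix sum of B is at most −k. Then for every integer b such that Pr(χ(B) ≥ b) > 0, one has Pr(E^L_k | χ(B) ≥ b) ≤ w/k². -/

import Mathlib

open MeasureTheory ProbabilityTheory
open scoped ENNReal NNReal

namespace Schelling

/-- Labels: `true` = type `x`, `false` = type `o`.
A configuration on the ring of `n` nodes assigns a label to each node. -/
abbrev Config (n : ℕ) := ZMod n → Bool

/-- The ±1 value of a label: `x ↦ +1`, `o ↦ -1`. -/
def xval (b : Bool) : ℤ := if b then 1 else -1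

/-- A node `i` is happy (tolerance τ = 1/2) if at least `w` of its `2w` nearest
neighbours `i ± 1, …, i ± w` carry the same label as `i`. -/
def happy (w : ℕ) {n : ℕ} (c : Config n) (i : ZMod n) : Prop :=
  w ≤ ∑ k ∈ Finset.Icc 1 w,
      ((if c (i + (k : ZMod n)) = c i then 1 else 0) +
       (if c (i - (k : ZMod n)) = c i then 1 else 0))

instance (w : ℕ) {n : ℕ} (c : Config n) (i : ZMod n) : Decidable (happy w c i) :=
  Nat.decLe _ _

/-- The result of exchanging the labels of nodes `i` and `j`. -/
def doSwap {n : ℕ} (c : Config n) (i j : ZMod n) : Config n :=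
  Function.update (Function.update c i (c j)) j (c i)

/-- One step of the dynamics: the proposed pair `p` swaps labels iff both nodes are
unhappy and carry opposite labels. -/
def swapStep (w : ℕ) {n : ℕ} (c : Config n) (p : ZMod n × ZMod n) : Config n :=
  if ¬ happy w c p.1 ∧ ¬ happy w c p.2 ∧ c p.1 ≠ c p.2 then doSwap c p.1 p.2 else c

/-- The trajectory of the segregation process started from `c0`, where `pr t` is the
pair of nodes proposed for a swap at time `t`. -/
def traj (w : ℕ) {n : ℕ} (c0 : Config n) (pr : ℕ → ZMod n × ZMod n) : ℕ → Config n
  | 0 => c0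
  | t + 1 => swapStep w (traj w c0 pr t) (pr t)

/-- A configuration is frozen if it contains no pair of unhappy, oppositely labeled
nodes, so that no further swaps are possible. -/
def Frozen (w : ℕ) {n : ℕ} (c : Config n) : Prop :=
  ∀ i j : ZMod n, ¬(¬ happy w c i ∧ ¬ happy w c j ∧ c i ≠ c j)

/-- `c'` is obtained from `c` by one legal swap: two distinct unhappy, oppositely
labeled nodes exchange labels. -/
def LegalSwap (w : ℕ) {n : ℕ} (c c' : Config n) : Prop :=
  ∃ i j : ZMod n, i ≠ j ∧ ¬ happy w c i ∧ ¬ happy w c j ∧ c i ≠ c j ∧ c' = doSwap c i j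

/-- The block of `len` consecutive nodes starting at `s` is monochromatic. -/
def MonochromaticBlock {n : ℕ} (c : Config n) (s : ZMod n) (len : ℕ) : Prop :=
  ∀ k < len, c (s + (k : ZMod n)) = c s

/-- A firewall is a monochromatic block of at least `w + 1` consecutive nodes. -/
def HasFirewall (w : ℕ) {n : ℕ} (c : Config n) : Prop :=
  ∃ (s : ZMod n) (len : ℕ), w + 1 ≤ len ∧ MonochromaticBlock c s len

/-- Node `i` belongs to some firewall of `c`. -/
def InFirewall (w : ℕ) {n : ℕ} (c : Config n) (i : ZMod n) : Prop :=
  ∃ (s : ZMod n) (len : ℕ), w + 1 ≤ len ∧ MonochromaticBlock c s len ∧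
    ∃ k < len, i = s + (k : ZMod n)

instance (n : ℕ) : MeasurableSpace (ZMod n) := ⊤

/-- The uniform probability measure on a finite set `s`. -/
noncomputable def uniformOn {α : Type*} [MeasurableSpace α] (s : Finset α) : Measure α :=
  (s.card : ℝ≥0∞)⁻¹ • ∑ a ∈ s, Measure.dirac a

/-- Unordered proposals are modeled as ordered pairs of distinct nodes. -/
def distinctPairs (n : ℕ) [NeZero n] : Finset (ZMod n × ZMod n) :=
  Finset.univ.filter fun p => p.1 ≠ p.2

/-- The uniform distribution of the initial configuration. -/
noncomputable def configMeasure (n : ℕ) [NeZero n] : Measure (Config n) :=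
  uniformOn (Finset.univ : Finset (Config n))

/-- The uniform distribution of a proposed pair. -/
noncomputable def pairMeasure (n : ℕ) [NeZero n] : Measure (ZMod n × ZMod n) :=
  uniformOn (distinctPairs n)

/-- `(init, prop)` is a realization of the segregation process randomness: for every
finite horizon `T`, the initial configuration together with the first `T` proposals is
distributed as (uniform configuration) × (i.i.d. uniform distinct pairs). -/
def IsSchellingProcess (n : ℕ) [NeZero n] {Ω : Type*} [MeasurableSpace Ω]
    (μ : Measure Ω) (init : Ω → Config n) (prop : ℕ → Ω → ZMod n × ZMod n) : Prop :=
  ∀ T : ℕ, Measure.map (fun ω => (init ω, fun t : Fin T => prop t ω)) μ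
      = (configMeasure n).prod (Measure.pi fun _ : Fin T => pairMeasure n)

/-- The x-bias of node `i`: the sum of the ±1 values over the window `i - w, …, i + w`. -/
def bias (w : ℕ) {n : ℕ} (c : Config n) (i : ZMod n) : ℤ :=
  xval (c i) + ∑ k ∈ Finset.Icc 1 w,
    (xval (c (i + (k : ZMod n))) + xval (c (i - (k : ZMod n))))

/-- An x-firewall incubator: a block `F` of `len` consecutive nodes starting at `s`,
made of a left defender (first `w+1` nodes), an internal block, and a right defender
(last `w+1` nodes), such that every node of `F` has x-bias `> √w`, the minimum bias on
the left defender is attained at its left endpoint, and the minimum bias on the right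
defender is attained at its right endpoint. -/
def IsIncubator (w : ℕ) {n : ℕ} (c : Config n) (s : ZMod n) (len : ℕ) : Prop :=
  2 * (w + 1) ≤ len ∧
  (∀ k < len, Real.sqrt w < ((bias w c (s + (k : ZMod n)) : ℤ) : ℝ)) ∧
  (∀ k < w + 1, bias w c s ≤ bias w c (s + (k : ZMod n))) ∧
  (∀ k < w + 1,
    bias w c (s + ((len - 1 : ℕ) : ZMod n)) ≤ bias w c (s + ((len - 1 - k : ℕ) : ZMod n)))

/-- The sum of the first `j` entries of a ±1 sequence. -/
def chiPrefix {m : ℕ} (B : Fin m → Bool) (j : ℕ) : ℤ :=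
  ∑ i : Fin m, if (i : ℕ) < j then xval (B i) else 0

/-- The total sum of a ±1 sequence. -/
def chi {m : ℕ} (B : Fin m → Bool) : ℤ := ∑ i : Fin m, xval (B i)

/-- The sum of the last `j` entries of a ±1 sequence. -/
def chiSuffix {m : ℕ} (B : Fin m → Bool) (j : ℕ) : ℤ :=
  ∑ i : Fin m, if m - j ≤ (i : ℕ) then xval (B i) else 0

/-- A sequence `B ∈ {±1}^w` is x-promoting if `χ(B) ≥ 5√w` and for all `1 ≤ j ≤ w`,
`χ_j(B) > -2√w` and `χ_{-j}(B) > -2√w`. -/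
def XPromoting (w : ℕ) (B : Fin w → Bool) : Prop :=
  5 * Real.sqrt w ≤ ((chi B : ℤ) : ℝ) ∧
  ∀ j : ℕ, 1 ≤ j → j ≤ w →
    (-2) * Real.sqrt w < ((chiPrefix B j : ℤ) : ℝ) ∧
    (-2) * Real.sqrt w < ((chiSuffix B j : ℤ) : ℝ)

/-- The concatenation of the three length-`w` sequences `B, B', B''`, as a function on
positions `0, …, 3w - 1`. -/
def concat3 (w : ℕ) (B B' B'' : Fin w → Bool) (i : ℕ) : Bool :=
  if h : i < w then B ⟨i, h⟩
  else if h' : i < 2 * w then B' ⟨i - w, by omega⟩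
  else if h'' : i < 3 * w then B'' ⟨i - 2 * w, by omega⟩
  else false

/-- The sign sequences of length `a + b` containing exactly `a` entries `+1`
(i.e. `true`) and `b` entries `-1` (i.e. `false`). -/
def ballotSeqs (a b : ℕ) : Finset (Fin (a + b) → Bool) :=
  Finset.univ.filter fun f => (Finset.univ.filter fun i => f i = true).card = a

/-- Node `i` is, at time `t`, selected to participate in a proposed swap together with
an unhappy, oppositely labeled node. -/
def selectedWith (w : ℕ) {n : ℕ} (c0 : Config n) (pr : ℕ → ZMod n × ZMod n)
    (i : ZMod n) (t : ℕ) : Prop :=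
  ((pr t).1 = i ∧ ¬ happy w (traj w c0 pr t) (pr t).2 ∧
      traj w c0 pr t (pr t).2 ≠ traj w c0 pr t i) ∨
  ((pr t).2 = i ∧ ¬ happy w (traj w c0 pr t) (pr t).1 ∧
      traj w c0 pr t (pr t).1 ≠ traj w c0 pr t i)

/-- The satisfaction time of node `i`: the first time at which `i` is selected in a
proposed swap together with an unhappy, oppositely labeled node (`∞` if never). -/
noncomputable def satTime (w : ℕ) {n : ℕ} (c0 : Config n) (pr : ℕ → ZMod n × ZMod n)
    (i : ZMod n) : ℕ∞ :=
  sInf {t : ℕ∞ | ∃ t' : ℕ, t = (t' : ℕ∞) ∧ selectedWith w c0 pr i t'}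

/-- Node `i` is impatient at time `t` if it is unhappy at time `t` and `t ≤ t*_i`. -/
def Impatient (w : ℕ) {n : ℕ} (c0 : Config n) (pr : ℕ → ZMod n × ZMod n)
    (i : ZMod n) (t : ℕ) : Prop :=
  ¬ happy w (traj w c0 pr t) i ∧ (t : ℕ∞) ≤ satTime w c0 pr i

/-- The left combatants of the block starting at `s`: the nodes of the left attacker
`A_L = {s - w, …, s - 1}` initially labeled `x`, together with the nodes of the left
defender `D_L = {s, …, s + w}` initially labeled `o`. -/
def leftCombatants (w : ℕ) {n : ℕ} [NeZero n] (c0 : Config n) (s : ZMod n) :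
    Finset (ZMod n) :=
  ((Finset.Icc 1 w).image fun k : ℕ => s - (k : ZMod n)).filter (fun i => c0 i = true) ∪
  ((Finset.range (w + 1)).image fun k : ℕ => s + (k : ZMod n)).filter (fun i => c0 i = false)

/-- The right combatants of the block of length `len` starting at `s`: the nodes of the
right attacker `A_R = {s + len, …, s + len + w - 1}` initially labeled `x`, together
with the nodes of the right defender `D_R = {s + len - 1 - w, …, s + len - 1}` initially
labeled `o`. -/
def rightCombatants (w : ℕ) {n : ℕ} [NeZero n] (c0 : Config n) (s : ZMod n) (len : ℕ) :
    Finset (ZMod n) :=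
  ((Finset.range w).image fun k : ℕ => s + ((len + k : ℕ) : ZMod n)).filter
      (fun i => c0 i = true) ∪
  ((Finset.range (w + 1)).image fun k : ℕ => s + ((len - 1 - k : ℕ) : ZMod n)).filter
      (fun i => c0 i = false)

/-- `l` is a pseudo-transcript of the combatant set `C` relative to time `t0`: it
enumerates `C` without repetitions, all combatants with satisfaction time `> t0` come
first (in an arbitrary order, corresponding to an arbitrary permutation of their
signs), and the remaining combatants are listed in decreasing order of satisfaction
time. -/
def IsPseudoTranscript (w : ℕ) {n : ℕ} (c0 : Config n) (pr : ℕ → ZMod n × ZMod n)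
    (t0 : ℕ) (C : Finset (ZMod n)) (l : List (ZMod n)) : Prop :=
  l.Nodup ∧ l.toFinset = C ∧
  ∀ p q : Fin l.length, (p : ℕ) < (q : ℕ) →
    ((t0 : ℕ∞) < satTime w c0 pr (l.get q) → (t0 : ℕ∞) < satTime w c0 pr (l.get p)) ∧
    (satTime w c0 pr (l.get q) ≤ (t0 : ℕ∞) → satTime w c0 pr (l.get p) ≤ (t0 : ℕ∞) →
      satTime w c0 pr (l.get q) ≤ satTime w c0 pr (l.get p))

/-- All partial sums of the sign sequence associated to the list `l` (where each node
contributes the ±1 value of its initial label) are nonnegative. -/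
def NonnegPartialSums {n : ℕ} (c0 : Config n) (l : List (ZMod n)) : Prop :=
  ∀ m ≤ l.length, 0 ≤ ((l.take m).map fun i => xval (c0 i)).sum

/-- Nodes `i` and `j` belong to the same monochromatic run of `c`. -/
def sameRun {n : ℕ} (c : Config n) (i j : ZMod n) : Prop :=
  ∃ k : ℕ, ((j = i + (k : ZMod n)) ∧ ∀ m ≤ k, c (i + (m : ZMod n)) = c i) ∨
           ((j = i - (k : ZMod n)) ∧ ∀ m ≤ k, c (i - (m : ZMod n)) = c i)

/-- The length of the monochromatic run of `c` containing node `i`. -/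
noncomputable def runLength {n : ℕ} (c : Config n) (i : ZMod n) : ℕ :=
  Nat.card {j : ZMod n // sameRun c i j}

/-- The number of unhappy nodes with label `b`. -/
noncomputable def unhappyCount (w : ℕ) {n : ℕ} (c : Config n) (b : Bool) : ℕ :=
  Nat.card {i : ZMod n // c i = b ∧ ¬ happy w c i}

/-- The number of impatient nodes at time `t`. -/
noncomputable def impatientCount (w : ℕ) {n : ℕ} (c0 : Config n)
    (pr : ℕ → ZMod n × ZMod n) (t : ℕ) : ℕ :=
  Nat.card {i : ZMod n // Impatient w c0 pr i t}

/-- The absolute difference between the numbers of unhappy `x`'s and unhappy `o`'s. -/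
noncomputable def unhappyImbalance (w : ℕ) {n : ℕ} (c : Config n) : ℝ :=
  |(unhappyCount w c true : ℝ) - (unhappyCount w c false : ℝ)|

/-- The earliest time at which fewer than `bound` nodes are impatient (`∞` if never). -/
noncomputable def firstFewImpatient (w : ℕ) {n : ℕ} (c0 : Config n)
    (pr : ℕ → ZMod n × ZMod n) (bound : ℝ) : ℕ∞ :=
  sInf {t : ℕ∞ | ∃ t' : ℕ, t = (t' : ℕ∞) ∧ (impatientCount w c0 pr t' : ℝ) < bound}

/-- The earliest time at which the numbers of unhappy `x`'s and unhappy `o`'s differ by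
more than `bound` (`∞` if never). -/
noncomputable def firstImbalance (w : ℕ) {n : ℕ} (c0 : Config n)
    (pr : ℕ → ZMod n × ZMod n) (bound : ℝ) : ℕ∞ :=
  sInf {t : ℕ∞ | ∃ t' : ℕ, t = (t' : ℕ∞) ∧ bound < unhappyImbalance w (traj w c0 pr t')}

/-- In the disjoint-cycles graph `G` (cycles of length `L`), the node reached from `i`
by moving `k` steps forward inside `i`'s cycle. -/
def gnbr (L : ℕ) {n : ℕ} (i : ZMod n) (k : ℕ) : ZMod n :=
  (((i.val / L) * L + ((i.val % L + k) % L) : ℕ) : ZMod n)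

/-- Happiness with respect to the disjoint-cycles graph `G`. -/
def ghappy (w L : ℕ) {n : ℕ} (c : Config n) (i : ZMod n) : Prop :=
  w ≤ ∑ k ∈ Finset.Icc 1 w,
      ((if c (gnbr L i k) = c i then 1 else 0) +
       (if c (gnbr L i (L - k)) = c i then 1 else 0))

instance (w L : ℕ) {n : ℕ} (c : Config n) (i : ZMod n) : Decidable (ghappy w L c i) :=
  Nat.decLe _ _

/-- One step of the segregation dynamics on the disjoint-cycles graph `G`. -/
def gswapStep (w L : ℕ) {n : ℕ} (c : Config n) (p : ZMod n × ZMod n) : Config n :=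
  if ¬ ghappy w L c p.1 ∧ ¬ ghappy w L c p.2 ∧ c p.1 ≠ c p.2 then doSwap c p.1 p.2 else c

/-- The trajectory of the process on `G`, coupled with the ring process by using the
same initial configuration and the same proposed pairs. -/
def gtraj (w L : ℕ) {n : ℕ} (c0 : Config n) (pr : ℕ → ZMod n × ZMod n) : ℕ → Config n
  | 0 => c0
  | t + 1 => gswapStep w L (gtraj w L c0 pr t) (pr t)

/-- The set of nodes within `w` steps of `i` in either graph (including `i`). -/
def nbhd (w L : ℕ) {n : ℕ} (i : ZMod n) : Set (ZMod n) :=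
  {j | ∃ k ≤ w, j = i + (k : ZMod n) ∨ j = i - (k : ZMod n) ∨
        j = gnbr L i k ∨ j = gnbr L i (L - k)}

open Classical in
/-- The tainted set `D(t)`: initially the nodes whose residue mod `L` lies in
`{-w+1, …, w-1}`; whenever a proposed pair touches a tainted node, all nodes within `w`
steps (in either graph) of either member of the pair become tainted. -/
noncomputable def tainted (w L : ℕ) {n : ℕ} (pr : ℕ → ZMod n × ZMod n) :
    ℕ → Set (ZMod n)
  | 0 => {i | i.val % L < w ∨ L - w < i.val % L}
  | t + 1 =>
      if (pr t).1 ∈ tainted w L pr t ∨ (pr t).2 ∈ tainted w L pr t then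
        tainted w L pr t ∪ nbhd w L (pr t).1 ∪ nbhd w L (pr t).2
      else tainted w L pr t

section PrefixEventAux
open Finset

/- ### basic xval / chi lemmas -/

lemma xval_mono {b c : Bool} (h : b ≤ c) : xval b ≤ xval c := by
  cases b <;> cases c <;> simp_all [xval] <;> exact absurd h (by decide)

lemma xval_not (b : Bool) : xval (!b) = - xval b := by cases b <;> simp [xval]

lemma xval_sq (b : Bool) : xval b * xval b = 1 := by cases b <;> simp [xval]

lemma chiPrefix_mono {w : ℕ} {B B' : Fin w → Bool} (h : B ≤ B') (j : ℕ) :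
    chiPrefix B j ≤ chiPrefix B' j := by
  refine Finset.sum_le_sum fun i _ => ?_
  by_cases hi : (i : ℕ) < j <;> simp [hi, xval_mono (h i)]

lemma chi_mono {w : ℕ} {B B' : Fin w → Bool} (h : B ≤ B') : chi B ≤ chi B' :=
  Finset.sum_le_sum fun i _ => xval_mono (h i)

lemma chiPrefix_filter {w : ℕ} (B : Fin w → Bool) (j : ℕ) :
    chiPrefix B j = ∑ i ∈ univ.filter (fun i : Fin w => (i : ℕ) < j), xval (B i) := by
  rw [chiPrefix, Finset.sum_filter]

lemma chiPrefix_zero {w : ℕ} (B : Fin w → Bool) : chiPrefix B 0 = 0 := by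
  simp [chiPrefix]

lemma chiPrefix_of_ge {w : ℕ} (B : Fin w → Bool) {j : ℕ} (hj : w ≤ j) :
    chiPrefix B j = chi B := by
  unfold chiPrefix chi
  exact Finset.sum_congr rfl fun i _ => by simp [lt_of_lt_of_le i.is_lt hj]

lemma chi_split {w : ℕ} (B : Fin w → Bool) (j : ℕ) :
    ∑ i ∈ univ.filter (fun i : Fin w => ¬ (i : ℕ) < j), xval (B i) = chi B - chiPrefix B j := by
  rw [chiPrefix_filter, chi, eq_sub_iff_add_eq, add_comm]
  exact Finset.sum_filter_add_sum_filter_not _ _ _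

/- ### second moment : ∑ χ² = w 2^w -/

lemma sum_xval_mul_eq_zero {w : ℕ} {i j : Fin w} (hij : i ≠ j) :
    ∑ B : Fin w → Bool, xval (B i) * xval (B j) = 0 := by
  classical
  refine Finset.sum_ninvolution (fun B => Function.update B i (!B i)) ?_ ?_
    (fun _ => mem_univ _) ?_
  · intro B
    rw [Function.update_self, Function.update_of_ne (Ne.symm hij), xval_not]
    ring
  · intro B _ h
    have := congrFun h i
    simp at this
  · intro B
    funext t
    by_cases ht : t = i
    · subst ht; simp
    · simp [Function.update_of_ne ht]

lemma sum_chi_sq (w : ℕ) :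
    ∑ B : Fin w → Bool, chi B ^ 2 = (w : ℤ) * 2 ^ w := by
  classical
  have h : ∀ B : Fin w → Bool, chi B ^ 2 = ∑ i : Fin w, ∑ j : Fin w, xval (B i) * xval (B j) := by
    intro B; rw [sq, chi, Finset.sum_mul_sum]
  simp_rw [h]
  rw [Finset.sum_comm]
  have : ∀ i : Fin w, ∑ B : Fin w → Bool, ∑ j : Fin w, xval (B i) * xval (B j) = 2 ^ w := by
    intro i
    rw [Finset.sum_comm]
    have hinner : ∀ j : Fin w, ∑ B : Fin w → Bool, xval (B i) * xval (B j)
        = if j = i then (2 : ℤ) ^ w else 0 := by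
      intro j
      by_cases hji : j = i
      · subst hji
        simp_rw [xval_sq]
        simp [Finset.card_univ]
      · simp [hji, sum_xval_mul_eq_zero (Ne.symm hji)]
    simp_rw [hinner]
    simp
  simp_rw [this]
  simp [mul_comm]

/- ### Chebyshev counting -/

lemma chebyshev_count (w k : ℕ) :
    ((univ.filter fun B : Fin w → Bool => (k : ℤ) ≤ |chi B|).card : ℤ) * (k : ℤ) ^ 2
      ≤ (w : ℤ) * 2 ^ w := by
  classical
  calc ((univ.filter fun B : Fin w → Bool => (k : ℤ) ≤ |chi B|).card : ℤ) * (k : ℤ) ^ 2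
      = ∑ _B ∈ univ.filter fun B : Fin w → Bool => (k : ℤ) ≤ |chi B|, (k : ℤ) ^ 2 := by
        rw [Finset.sum_const, nsmul_eq_mul]
    _ ≤ ∑ B ∈ univ.filter fun B : Fin w → Bool => (k : ℤ) ≤ |chi B|, chi B ^ 2 := by
        refine Finset.sum_le_sum fun B hB => ?_
        have hk : (k : ℤ) ≤ |chi B| := (Finset.mem_filter.1 hB).2
        calc (k : ℤ) ^ 2 ≤ |chi B| ^ 2 := pow_le_pow_left₀ (by positivity) hk 2
          _ = chi B ^ 2 := sq_abs _
    _ ≤ ∑ B : Fin w → Bool, chi B ^ 2 :=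
        Finset.sum_le_sum_of_subset_of_nonneg (filter_subset _ _) fun B _ _ => sq_nonneg _
    _ = (w : ℤ) * 2 ^ w := sum_chi_sq w

/- ### reflection -/

section Reflection

attribute [local instance] Classical.propDecidable

variable {w k : ℕ}

/-- The hitting event. -/
def Epred (k : ℕ) {w : ℕ} (B : Fin w → Bool) : Prop := ∃ j : ℕ, chiPrefix B j ≤ -(k : ℤ)

/-- First hitting time (0 if never). -/
noncomputable def tau (k : ℕ) {w : ℕ} (B : Fin w → Bool) : ℕ :=
  if h : Epred k B then Nat.find h else 0

/-- Flip all entries from position `t` onwards. -/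
def reflect (t : ℕ) {w : ℕ} (B : Fin w → Bool) : Fin w → Bool :=
  fun i => if (i : ℕ) < t then B i else !(B i)

lemma tau_spec {B : Fin w → Bool} (h : Epred k B) : chiPrefix B (tau k B) ≤ -(k : ℤ) := by
  rw [tau, dif_pos h]; exact Nat.find_spec h

lemma tau_min {B : Fin w → Bool} (h : Epred k B) {j : ℕ} (hj : j < tau k B) :
    ¬ chiPrefix B j ≤ -(k : ℤ) := by
  rw [tau, dif_pos h] at hj; exact Nat.find_min h hj

lemma reflect_involutive (t : ℕ) (B : Fin w → Bool) : reflect t (reflect t B) = B := by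
  funext i
  by_cases hi : (i : ℕ) < t <;> simp [reflect, hi]

lemma chiPrefix_reflect {t : ℕ} (B : Fin w → Bool) {j : ℕ} (hj : j ≤ t) :
    chiPrefix (reflect t B) j = chiPrefix B j := by
  refine Finset.sum_congr rfl fun i _ => ?_
  by_cases hi : (i : ℕ) < j
  · rw [if_pos hi, if_pos hi, reflect, if_pos (lt_of_lt_of_le hi hj)]
  · rw [if_neg hi, if_neg hi]

lemma chi_reflect (t : ℕ) (B : Fin w → Bool) :
    chi (reflect t B) = 2 * chiPrefix B t - chi B := by
  have h1 : chi (reflect t B) =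
      (∑ i ∈ univ.filter (fun i : Fin w => (i : ℕ) < t), xval (B i)) +
      (∑ i ∈ univ.filter (fun i : Fin w => ¬ (i : ℕ) < t), - xval (B i)) := by
    rw [chi, ← Finset.sum_filter_add_sum_filter_not univ (fun i : Fin w => (i : ℕ) < t)]
    congr 1
    · exact Finset.sum_congr rfl fun i hi => by
        rw [reflect, if_pos (Finset.mem_filter.1 hi).2]
    · exact Finset.sum_congr rfl fun i hi => by
        rw [reflect, if_neg (Finset.mem_filter.1 hi).2, xval_not]
  rw [h1, Finset.sum_neg_distrib, chi_split, ← chiPrefix_filter]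
  ring

lemma tau_reflect {B : Fin w → Bool} (h : Epred k B) :
    tau k (reflect (tau k B) B) = tau k B := by
  have hmem : Epred k (reflect (tau k B) B) :=
    ⟨tau k B, by rw [chiPrefix_reflect B le_rfl]; exact tau_spec h⟩
  rw [tau, dif_pos hmem]
  apply (Nat.find_eq_iff hmem).2
  constructor
  · rw [chiPrefix_reflect B le_rfl]; exact tau_spec h
  · intro j hj
    rw [chiPrefix_reflect B hj.le]
    exact tau_min h hj

lemma chi_flipAll (B : Fin w → Bool) : chi (fun i => !(B i)) = - chi B := by
  rw [chi, chi, ← Finset.sum_neg_distrib]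
  exact Finset.sum_congr rfl fun i _ => xval_not _

/-- Reflection injection: sequences hitting `-k` but ending above `-k` inject into
sequences ending above `k`. -/
lemma card_hit_not_low_le (w k : ℕ) :
    ((univ.filter fun B : Fin w → Bool => Epred k B ∧ ¬ chi B ≤ -(k : ℤ)).card : ℕ)
      ≤ (univ.filter fun B : Fin w → Bool => (k : ℤ) < chi B).card := by
  classical
  refine Finset.card_le_card_of_injOn (fun B => fun i => !(reflect (tau k B) B i)) ?_ ?_
  · intro B hB
    rw [Finset.mem_coe, Finset.mem_filter] at hB ⊢
    obtain ⟨-, hE, hc⟩ := hB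
    push_neg at hc
    refine ⟨mem_univ _, ?_⟩
    have : chi (fun i => !(reflect (tau k B) B i)) = -(2 * chiPrefix B (tau k B) - chi B) := by
      rw [chi_flipAll, chi_reflect]
    rw [this]
    have h1 : chiPrefix B (tau k B) ≤ -(k : ℤ) := tau_spec hE
    linarith
  · intro B hB B' hB' hf
    rw [Finset.coe_filter, Set.mem_setOf_eq] at hB hB'
    have hrefl : reflect (tau k B) B = reflect (tau k B') B' := by
      funext i
      have := congrFun hf i
      simpa using this
    have ht : tau k B = tau k B' := by
      have := tau_reflect (k := k) hB.2.1
      rw [hrefl, tau_reflect hB'.2.1] at this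
      exact this.symm
    calc B = reflect (tau k B) (reflect (tau k B) B) := (reflect_involutive _ _).symm
      _ = reflect (tau k B') (reflect (tau k B') B') := by rw [hrefl, ht]
      _ = B' := reflect_involutive _ _

/-- The main counting bound: `|E| k² ≤ w 2^w`. -/
lemma card_E_bound (w k : ℕ) (hk : 0 < k) :
    ((univ.filter fun B : Fin w → Bool => Epred k B).card) * k ^ 2 ≤ w * 2 ^ w := by
  classical
  have hsplit :
      (univ.filter fun B : Fin w → Bool => Epred k B).card
        ≤ (univ.filter fun B : Fin w → Bool => chi B ≤ -(k : ℤ)).card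
          + (univ.filter fun B : Fin w → Bool => (k : ℤ) < chi B).card := by
    have h1 : (univ.filter fun B : Fin w → Bool => Epred k B).card
        = (univ.filter fun B : Fin w → Bool => Epred k B ∧ chi B ≤ -(k : ℤ)).card
          + (univ.filter fun B : Fin w → Bool => Epred k B ∧ ¬ chi B ≤ -(k : ℤ)).card := by
      rw [← Finset.filter_filter, ← Finset.filter_filter,
        Finset.card_filter_add_card_filter_not]
    rw [h1]
    refine Nat.add_le_add (Finset.card_le_card fun B hB => ?_) (card_hit_not_low_le w k)
    rw [Finset.mem_filter] at hB ⊢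
    exact ⟨hB.1, hB.2.2⟩
  have hsub :
      (univ.filter fun B : Fin w → Bool => chi B ≤ -(k : ℤ)).card
          + (univ.filter fun B : Fin w → Bool => (k : ℤ) < chi B).card
        ≤ (univ.filter fun B : Fin w → Bool => (k : ℤ) ≤ |chi B|).card := by
    rw [← Finset.card_union_of_disjoint]
    · refine Finset.card_le_card (Finset.union_subset ?_ ?_) <;>
        · refine fun B hB => ?_
          rw [Finset.mem_filter] at hB ⊢
          refine ⟨hB.1, ?_⟩
          rcases le_or_gt (chi B) 0 with h | h <;>
            [rw [abs_of_nonpos h]; rw [abs_of_pos h]] <;> omega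
    · rw [Finset.disjoint_filter]
      intro B _ h1 h2
      have : (0 : ℤ) < k := by exact_mod_cast hk
      omega
  have hcheb := chebyshev_count w k
  have : ((univ.filter fun B : Fin w → Bool => Epred k B).card : ℤ) * (k : ℤ) ^ 2
      ≤ (w : ℤ) * 2 ^ w := by
    calc ((univ.filter fun B : Fin w → Bool => Epred k B).card : ℤ) * (k : ℤ) ^ 2
        ≤ ((univ.filter fun B : Fin w → Bool => (k : ℤ) ≤ |chi B|).card : ℤ) * (k : ℤ) ^ 2 := by
          have := hsplit.trans hsub
          exact mul_le_mul_of_nonneg_right (by exact_mod_cast this) (by positivity)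
      _ ≤ (w : ℤ) * 2 ^ w := hcheb
  exact_mod_cast this

end Reflection

/- ### Harris-Kleitman transport to functions `Fin w → Bool` -/

section Harris

attribute [local instance] Classical.propDecidable

variable {w : ℕ}

/-- The subset of `Fin w` where `B` is `true`. -/
def toSet (B : Fin w → Bool) : Finset (Fin w) := univ.filter fun i => B i = true

lemma toSet_injective : Function.Injective (toSet (w := w)) := by
  intro B B' h
  funext i
  have : (i ∈ toSet B) = (i ∈ toSet B') := by rw [h]
  simpa [toSet] using this

lemma mem_toSet {B : Fin w → Bool} {i : Fin w} : i ∈ toSet B ↔ B i = true := by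
  simp [toSet]

lemma isLowerSet_image {P : (Fin w → Bool) → Prop} (hP : IsLowerSet {B | P B}) :
    IsLowerSet (((univ.filter fun B => P B).image toSet : Finset (Finset (Fin w))) :
      Set (Finset (Fin w))) := by
  intro s s' hsub hs
  rw [Finset.mem_coe, Finset.mem_image] at hs
  obtain ⟨B, hB, rfl⟩ := hs
  rw [Finset.mem_filter] at hB
  set B' : Fin w → Bool := fun i => decide (i ∈ s') with hB'
  have hts : toSet B' = s' := by
    ext i; simp [mem_toSet, hB']
  have hle : B' ≤ B := by
    intro i
    by_cases hi : i ∈ s'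
    · have : B i = true := mem_toSet.1 (hsub hi)
      simp [hB', this]
    · simp [hB', hi]
  have : P B' := hP hle hB.2
  rw [Finset.mem_coe, Finset.mem_image]
  exact ⟨B', Finset.mem_filter.2 ⟨mem_univ _, this⟩, hts⟩

lemma isUpperSet_image {Q : (Fin w → Bool) → Prop} (hQ : IsUpperSet {B | Q B}) :
    IsUpperSet (((univ.filter fun B => Q B).image toSet : Finset (Finset (Fin w))) :
      Set (Finset (Fin w))) := by
  intro s s' hsub hs
  rw [Finset.mem_coe, Finset.mem_image] at hs
  obtain ⟨B, hB, rfl⟩ := hs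
  rw [Finset.mem_filter] at hB
  set B' : Fin w → Bool := fun i => decide (i ∈ s') with hB'
  have hts : toSet B' = s' := by
    ext i; simp [mem_toSet, hB']
  have hle : B ≤ B' := by
    intro i
    by_cases hi : B i = true
    · have : i ∈ s' := hsub (mem_toSet.2 hi)
      simp [hB', this, hi]
    · simp [Bool.eq_false_iff.2 hi]
  have : Q B' := hQ hle hB.2
  rw [Finset.mem_coe, Finset.mem_image]
  exact ⟨B', Finset.mem_filter.2 ⟨mem_univ _, this⟩, hts⟩

/-- Harris inequality on the discrete cube: a lower event and an upper event
anticorrelate. -/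
lemma harris (P Q : (Fin w → Bool) → Prop)
    (hP : IsLowerSet {B | P B}) (hQ : IsUpperSet {B | Q B}) :
    2 ^ w * (univ.filter fun B => P B ∧ Q B).card
      ≤ (univ.filter fun B => P B).card * (univ.filter fun B => Q B).card := by
  have key := (isLowerSet_image hP).card_inter_le_finset (isUpperSet_image hQ)
  rw [Fintype.card_fin] at key
  rw [← Finset.image_inter _ _ toSet_injective] at key
  have hfilter : (univ.filter fun B => P B) ∩ (univ.filter fun B => Q B)
      = univ.filter fun B => P B ∧ Q B := by
    ext B; simp [Finset.mem_filter, Finset.mem_inter, and_assoc]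
  rw [hfilter] at key
  simpa [Finset.card_image_of_injective _ toSet_injective] using key

end Harris

/- ### measure computations -/

section MeasureLemmas

attribute [local instance] Classical.propDecidable

lemma uniformOn_univ_apply {α : Type*} [Fintype α] [MeasurableSpace α]
    [MeasurableSingletonClass α] (p : α → Prop) [DecidablePred p] :
    uniformOn (univ : Finset α) {a | p a}
      = ((univ.filter p).card : ℝ≥0∞) * ((Fintype.card α : ℝ≥0∞))⁻¹ := by
  set S : Set α := {a | p a} with hS_def
  have hS : MeasurableSet S := (Set.to_countable S).measurableSet
  rw [uniformOn, Measure.smul_apply, smul_eq_mul, Measure.finset_sum_apply]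
  simp_rw [Measure.dirac_apply' _ hS]
  rw [Finset.sum_indicator_eq_sum_filter]
  have : (univ.filter fun a => a ∈ S) = univ.filter p := by
    ext a; simp [hS_def]
  rw [this]
  simp [Finset.card_univ, mul_comm]

end MeasureLemmas

/- ### monotonicity of the events -/

lemma isLowerSet_Epred (w k : ℕ) : IsLowerSet {B : Fin w → Bool | Epred k B} := by
  intro B B' hle hB
  obtain ⟨j, hj⟩ := hB
  exact ⟨j, le_trans (chiPrefix_mono hle j) hj⟩

lemma isUpperSet_chi_ge (w : ℕ) (b : ℤ) : IsUpperSet {B : Fin w → Bool | b ≤ chi B} :=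
  fun B B' hle hB => le_trans hB (chi_mono hle)

section Assembly

attribute [local instance] Classical.propDecidable

/-- The key counting inequality. -/
lemma key_count (w k : ℕ) (hk : 0 < k) (b : ℤ) :
    (univ.filter fun B : Fin w → Bool => b ≤ chi B ∧ Epred k B).card * k ^ 2
      ≤ w * (univ.filter fun B : Fin w → Bool => b ≤ chi B).card := by
  have hharris := harris (Epred k) (fun B => b ≤ chi B) (isLowerSet_Epred w k)
    (isUpperSet_chi_ge w b)
  have hharris' : 2 ^ w * (univ.filter fun B : Fin w → Bool => Epred k B ∧ b ≤ chi B).card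
      ≤ (univ.filter fun B : Fin w → Bool => Epred k B).card
        * (univ.filter fun B : Fin w → Bool => b ≤ chi B).card := by
    convert hharris using 3 <;> (ext B; simp [Finset.mem_filter])
  have hEbound := card_E_bound w k hk
  have hcomm : (univ.filter fun B : Fin w → Bool => b ≤ chi B ∧ Epred k B).card
      = (univ.filter fun B : Fin w → Bool => Epred k B ∧ b ≤ chi B).card := by
    apply congrArg
    ext B
    simp only [Finset.mem_filter]
    tauto
  have h2w : 0 < 2 ^ w := Nat.pow_pos (by norm_num)
  refine Nat.le_of_mul_le_mul_left ?_ h2w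
  calc 2 ^ w * ((univ.filter fun B : Fin w → Bool => b ≤ chi B ∧ Epred k B).card * k ^ 2)
      = (2 ^ w * (univ.filter fun B : Fin w → Bool => Epred k B ∧ b ≤ chi B).card) * k ^ 2 := by
        rw [hcomm]; ring
    _ ≤ ((univ.filter fun B : Fin w → Bool => Epred k B).card
          * (univ.filter fun B : Fin w → Bool => b ≤ chi B).card) * k ^ 2 :=
        Nat.mul_le_mul_right _ hharris'
    _ = ((univ.filter fun B : Fin w → Bool => Epred k B).card * k ^ 2)
          * (univ.filter fun B : Fin w → Bool => b ≤ chi B).card := by ring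
    _ ≤ (w * 2 ^ w) * (univ.filter fun B : Fin w → Bool => b ≤ chi B).card :=
        Nat.mul_le_mul_right _ hEbound
    _ = 2 ^ w * (w * (univ.filter fun B : Fin w → Bool => b ≤ chi B).card) := by ring

/-- Final ENNReal arithmetic step. -/
lemma ennreal_final (cAE cA kk ww : ℕ) (hcA : cA ≠ 0) (hkk : 0 < kk)
    (hkey : cAE * kk ^ 2 ≤ ww * cA) (c : ℝ≥0∞) (hc0 : c ≠ 0) (hctop : c ≠ ∞) :
    ((cA : ℝ≥0∞) * c⁻¹)⁻¹ * ((cAE : ℝ≥0∞) * c⁻¹) ≤ ENNReal.ofReal ((ww : ℝ) / (kk : ℝ) ^ 2) := by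
  have ht0 : c⁻¹ ≠ 0 := ENNReal.inv_ne_zero.2 hctop
  have httop : c⁻¹ ≠ ∞ := ENNReal.inv_ne_top.2 hc0
  have hRHS : ENNReal.ofReal ((ww : ℝ) / (kk : ℝ) ^ 2)
      = (ww : ℝ≥0∞) / ((kk : ℝ≥0∞)) ^ 2 := by
    have hkpos : (0 : ℝ) < (kk : ℝ) ^ 2 := by positivity
    rw [ENNReal.ofReal_div_of_pos hkpos, ENNReal.ofReal_natCast,
      ENNReal.ofReal_pow (by positivity), ENNReal.ofReal_natCast]
  rw [hRHS]
  have hLHS : ((cA : ℝ≥0∞) * c⁻¹)⁻¹ * ((cAE : ℝ≥0∞) * c⁻¹) = (cAE : ℝ≥0∞) / (cA : ℝ≥0∞) := by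
    rw [ENNReal.mul_inv (Or.inl (by exact_mod_cast hcA)) (Or.inl (ENNReal.natCast_ne_top cA))]
    rw [div_eq_mul_inv]
    calc (cA : ℝ≥0∞)⁻¹ * (c⁻¹)⁻¹ * ((cAE : ℝ≥0∞) * c⁻¹)
        = (cAE : ℝ≥0∞) * (cA : ℝ≥0∞)⁻¹ * ((c⁻¹)⁻¹ * c⁻¹) := by ring
      _ = (cAE : ℝ≥0∞) * (cA : ℝ≥0∞)⁻¹ := by
          rw [ENNReal.inv_mul_cancel ht0 httop, mul_one]
  rw [hLHS]
  refine ENNReal.div_le_of_le_mul ?_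
  have hrw : (ww : ℝ≥0∞) / ((kk : ℝ≥0∞)) ^ 2 * (cA : ℝ≥0∞)
      = ((ww : ℝ≥0∞) * (cA : ℝ≥0∞)) / ((kk : ℝ≥0∞)) ^ 2 := by
    rw [div_eq_mul_inv, div_eq_mul_inv]; ring
  rw [hrw]
  rw [ENNReal.le_div_iff_mul_le (Or.inl (by positivity))
    (Or.inl (ENNReal.pow_ne_top (ENNReal.natCast_ne_top kk)))]
  have : ((cAE * kk ^ 2 : ℕ) : ℝ≥0∞) ≤ ((ww * cA : ℕ) : ℝ≥0∞) := by exact_mod_cast hkey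
  push_cast at this
  convert this using 2


/-- For a uniformly random `B ∈ {±1}^w`, `k > 0` and any integer `b`
with `Pr(χ(B) ≥ b) > 0`, we have `Pr(∃ j, χ_j(B) ≤ -k | χ(B) ≥ b) ≤ w / k²`. -/
theorem prefix_event_bound (w k : ℕ) (hk : 0 < k) (b : ℤ)
    (hb : 0 < uniformOn (Finset.univ : Finset (Fin w → Bool)) {B | b ≤ chi B}) :
    ProbabilityTheory.cond (uniformOn (Finset.univ : Finset (Fin w → Bool)))
        {B | b ≤ chi B} {B | ∃ j : ℕ, chiPrefix B j ≤ -(k : ℤ)}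
      ≤ ENNReal.ofReal ((w : ℝ) / (k : ℝ) ^ 2) := by
  have hAmeas : MeasurableSet {B : Fin w → Bool | b ≤ chi B} :=
    (Set.to_countable _).measurableSet
  rw [ProbabilityTheory.cond_apply hAmeas]
  have hAE : {B : Fin w → Bool | b ≤ chi B} ∩ {B | ∃ j : ℕ, chiPrefix B j ≤ -(k : ℤ)}
      = {B : Fin w → Bool | b ≤ chi B ∧ Epred k B} := rfl
  rw [hAE]
  rw [uniformOn_univ_apply (fun B : Fin w → Bool => b ≤ chi B)]
  rw [uniformOn_univ_apply (fun B : Fin w → Bool => b ≤ chi B ∧ Epred k B)]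
  rw [uniformOn_univ_apply (fun B : Fin w → Bool => b ≤ chi B)] at hb
  have hcA0 : (univ.filter fun B : Fin w → Bool => b ≤ chi B).card ≠ 0 := by
    intro h
    rw [h] at hb
    simp at hb
  exact ennreal_final _ _ k w hcA0 hk (key_count w k hk b) _
    (by simp [Fintype.card_pos]) (ENNReal.natCast_ne_top _)

end Assembly

end PrefixEventAux

end Schelling
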